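/- Let ℓ be a prime number, let L/K be a cyclic Galois extension of degree ℓ, and let B be the integral closure of A in L. Assume that the subgroup Γ_A of Γ_B has index ℓ, i.e. the quotient group Lˣ/(Bˣ·Kˣ) has order ℓ. Let s be a nonzero element of B whose class in Γ_B does not belong to Γ_A, i.e. there is no a ∈ Kˣ with s·a⁻¹ ∈ Bˣ. Then B·s^ℓ ⊆ A[s]; that is, for every x ∈ B, the element x·s^ℓ lies in the A-subalgebra of B generated by s. -/

import Mathlib

set_option synthInstance.maxHeartbeats 400000
set_option maxHeartbeats 1000000

open scoped IntermediateField


private theorem quot_aux {G : Type*} [CommGroup G] (H : Subgroup G) {p : ℕ} (hp : p.Prime)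
    (hcard : Nat.card (G ⧸ H) = p) :
    (∀ t : G, t ^ p ∈ H) ∧ ∀ g : G, g ∉ H → ∀ i : ℕ, 0 < i → i < p → g ^ i ∉ H := by
  haveI : Finite (G ⧸ H) := Nat.finite_of_card_ne_zero (by rw [hcard]; exact hp.ne_zero)
  constructor
  · intro t
    have h1 : ((t : G ⧸ H)) ^ p = 1 := by rw [← hcard]; exact pow_card_eq_one'
    rw [← QuotientGroup.mk_pow, QuotientGroup.eq_one_iff] at h1
    exact h1
  · intro g hg i hi0 hip hmem
    have h1 : ((g : G ⧸ H)) ≠ 1 := by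
      rw [Ne, QuotientGroup.eq_one_iff]
      exact hg
    have hdvd : orderOf ((g : G ⧸ H)) ∣ p := hcard ▸ orderOf_dvd_natCard _
    have hord : orderOf ((g : G ⧸ H)) = p := by
      rcases hp.eq_one_or_self_of_dvd _ hdvd with h | h
      · exact absurd (orderOf_eq_one_iff.mp h) h1
      · exact h
    have h2 : ((g : G ⧸ H)) ^ i = 1 := by
      rw [← QuotientGroup.mk_pow, QuotientGroup.eq_one_iff]
      exact hmem
    have h3 : p ∣ i := hord ▸ orderOf_dvd_of_pow_eq_one h2
    exact absurd (Nat.le_of_dvd hi0 h3) (by omega)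

theorem mul_pow_mem_adjoin_of_value_not_in
    {A K L : Type*} [CommRing A] [IsDomain A] [ValuationRing A] [HenselianLocalRing A]
    (hA : ¬IsField A)
    [Field K] [Algebra A K] [IsFractionRing A K]
    [Field L] [Algebra K L] [Algebra A L] [IsScalarTower A K L]
    [IsGalois K L] [FiniteDimensional K L]
    (ℓ : ℕ) (hℓ : ℓ.Prime) [IsCyclic (L ≃ₐ[K] L)]
    (hcard : Nat.card (L ≃ₐ[K] L) = ℓ)
    (hindex : Nat.card
      (Lˣ ⧸ ((Units.map (algebraMap ↥(integralClosure A L) L).toMonoidHom).range ⊔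
        (Units.map (algebraMap K L).toMonoidHom).range)) = ℓ)
    (s : ↥(integralClosure A L)) (hs : s ≠ 0)
    (hclass : ¬∃ (a : Kˣ) (b : (↥(integralClosure A L))ˣ),
      (s : L) = ((b : ↥(integralClosure A L)) : L) * algebraMap K L (a : K)) :
    ∀ x : ↥(integralClosure A L),
      x * s ^ ℓ ∈ Algebra.adjoin A ({s} : Set ↥(integralClosure A L)) := by
  classical
  haveI : IsFractionRing ↥(integralClosure A L) L :=
    integralClosure.isFractionRing_of_finite_extension K L
  set H : Subgroup Lˣ :=
    (Units.map (algebraMap ↥(integralClosure A L) L).toMonoidHom).range ⊔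
      (Units.map (algebraMap K L).toMonoidHom).range with hH
  -- membership in `H`
  have memH : ∀ t : Lˣ, t ∈ H ↔ ∃ (b : (↥(integralClosure A L))ˣ) (a : Kˣ),
      (t : L) = algebraMap ↥(integralClosure A L) L ↑b * algebraMap K L ↑a := by
    intro t
    rw [hH, Subgroup.mem_sup]
    constructor
    · rintro ⟨y, ⟨b, rfl⟩, z, ⟨a, rfl⟩, rfl⟩
      exact ⟨b, a, rfl⟩
    · rintro ⟨b, a, hba⟩
      refine ⟨Units.map _ b, ⟨b, rfl⟩, Units.map _ a, ⟨a, rfl⟩, ?_⟩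
      ext
      simpa using hba.symm
  have hsL : (s : L) ≠ 0 := fun h => hs (ZeroMemClass.coe_eq_zero.mp h)
  set sU : Lˣ := Units.mk0 (s : L) hsL with hsU
  obtain ⟨hexp, hord⟩ := quot_aux H hℓ hindex
  have hsnotH : sU ∉ H := by
    intro h
    rw [memH] at h
    obtain ⟨b, a, hba⟩ := h
    exact hclass ⟨a, b, hba⟩
  -- comparability: every nonzero element of `L` or its inverse is integral over `A`
  have comp : ∀ t : L, t ≠ 0 →
      t ∈ integralClosure A L ∨ t⁻¹ ∈ integralClosure A L := by
    intro t ht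
    set tU : Lˣ := Units.mk0 t ht with htU
    have hpow : tU ^ ℓ ∈ H := hexp tU
    rw [memH] at hpow
    obtain ⟨b, a, hba⟩ := hpow
    have hba' : t ^ ℓ = algebraMap ↥(integralClosure A L) L ↑b * algebraMap K L ↑a := by
      simpa [htU] using hba
    have hbinv : algebraMap ↥(integralClosure A L) L ↑(b⁻¹) =
        (algebraMap ↥(integralClosure A L) L ↑b)⁻¹ := by
      apply eq_inv_of_mul_eq_one_left
      rw [← map_mul]
      norm_cast
      rw [inv_mul_cancel]
      exact map_one _
    rcases ValuationRing.isInteger_or_isInteger A (a : K) with ⟨c, hc⟩ | ⟨c, hc⟩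
    · left
      have h4 : IsIntegral A (t ^ ℓ) := by
        rw [hba']
        apply IsIntegral.mul
        · exact (↑b : ↥(integralClosure A L)).2
        · rw [← hc, ← IsScalarTower.algebraMap_apply]
          exact isIntegral_algebraMap
      exact IsIntegral.of_pow hℓ.pos h4
    · right
      have h4 : IsIntegral A (t⁻¹ ^ ℓ) := by
        have he : t⁻¹ ^ ℓ = algebraMap ↥(integralClosure A L) L ↑(b⁻¹) *
            algebraMap K L ((a : K)⁻¹) := by
          rw [hbinv, map_inv₀, inv_pow, hba', mul_inv]
        rw [he]
        apply IsIntegral.mul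
        · exact (↑(b⁻¹) : ↥(integralClosure A L)).2
        · rw [← hc, ← IsScalarTower.algebraMap_apply]
          exact isIntegral_algebraMap
      exact IsIntegral.of_pow hℓ.pos h4
  -- `B ∩ K = A`
  have capA : ∀ c : K, IsIntegral A (algebraMap K L c) → ∃ a : A, algebraMap A K a = c := by
    intro c hc
    have h1 : IsIntegral A c := by
      rwa [isIntegral_algebraMap_iff (algebraMap K L).injective] at hc
    exact IsIntegrallyClosed.isIntegral_iff.mp h1
  -- `B` is a valuation ring
  haveI hVB : ValuationRing ↥(integralClosure A L) := by
    rw [ValuationRing.iff_dvd_total]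
    constructor
    intro b₁ b₂
    rcases eq_or_ne b₁ 0 with rfl | h₁
    · exact Or.inr (dvd_zero _)
    rcases eq_or_ne b₂ 0 with rfl | h₂
    · exact Or.inl (dvd_zero _)
    have hb₁ : (b₁ : L) ≠ 0 := fun h => h₁ (ZeroMemClass.coe_eq_zero.mp h)
    have hb₂ : (b₂ : L) ≠ 0 := fun h => h₂ (ZeroMemClass.coe_eq_zero.mp h)
    rcases comp ((b₂ : L) / (b₁ : L)) (div_ne_zero hb₂ hb₁) with h | h
    · left
      refine ⟨⟨_, h⟩, ?_⟩
      ext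
      push_cast
      field_simp
    · right
      rw [inv_div] at h
      refine ⟨⟨_, h⟩, ?_⟩
      ext
      push_cast
      field_simp
  set v := ValuationRing.valuation ↥(integralClosure A L) L with hv
  have hv_le_one : ∀ t : L, v t ≤ 1 ↔ t ∈ integralClosure A L := by
    intro t
    rw [hv, ← Valuation.mem_integer_iff, ValuationRing.mem_integer_iff]
    constructor
    · rintro ⟨a, rfl⟩; exact a.2
    · intro h; exact ⟨⟨t, h⟩, rfl⟩
  have hv_unit : ∀ t : L, t ≠ 0 → v t = 1 → ∃ b : (↥(integralClosure A L))ˣ,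
      algebraMap ↥(integralClosure A L) L ↑b = t := by
    intro t ht hv1
    have h1 : t ∈ integralClosure A L := (hv_le_one t).mp hv1.le
    have h2 : t⁻¹ ∈ integralClosure A L := by
      apply (hv_le_one _).mp
      rw [map_inv₀, hv1, inv_one]
    refine ⟨⟨⟨t, h1⟩, ⟨t⁻¹, h2⟩, ?_, ?_⟩, rfl⟩
    · ext; push_cast; exact mul_inv_cancel₀ ht
    · ext; push_cast; exact inv_mul_cancel₀ ht
  -- finrank
  have hrank : Module.finrank K L = ℓ := by
    rw [← IsGalois.card_aut_eq_finrank, hcard]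
  have hgK : ∀ c : K, algebraMap K L c ≠ (s : L) := by
    intro c hc
    have hc0 : c ≠ 0 := by
      rintro rfl
      rw [map_zero] at hc
      exact hsL hc.symm
    exact hclass ⟨Units.mk0 c hc0, 1, by simp [hc]⟩
  have hint : IsIntegral K (s : L) := IsIntegral.of_finite K _
  have htop : K⟮(s : L)⟯ = ⊤ := by
    have hdvd : Module.finrank K K⟮(s : L)⟯ ∣ ℓ := by
      rw [← hrank]
      exact ⟨Module.finrank K⟮(s : L)⟯ L,
        (Module.finrank_mul_finrank K K⟮(s : L)⟯ L).symm⟩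
    rcases hℓ.eq_one_or_self_of_dvd _ hdvd with h | h
    · exfalso
      have hb : K⟮(s : L)⟯ = ⊥ := IntermediateField.finrank_eq_one_iff.mp h
      have hmem : (s : L) ∈ (⊥ : IntermediateField K L) :=
        hb ▸ IntermediateField.mem_adjoin_simple_self K (s : L)
      rw [IntermediateField.mem_bot] at hmem
      obtain ⟨c, hc⟩ := hmem
      exact hgK c hc
    · apply IntermediateField.eq_of_le_of_finrank_eq le_top
      rw [h, IntermediateField.finrank_top', hrank]
  -- power basis of `L` over `K` with generator `s`
  let pb0 := IntermediateField.adjoin.powerBasis hint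
  let e : K⟮(s : L)⟯ ≃ₐ[K] L := (IntermediateField.equivOfEq htop).trans IntermediateField.topEquiv
  let pb := pb0.map e
  have hgen' : pb.gen = (s : L) := rfl
  have hdim : pb.dim = ℓ := by rw [← pb.finrank, hrank]
  intro x
  rcases eq_or_ne x 0 with rfl | hx
  · rw [zero_mul]; exact zero_mem _
  obtain ⟨f, hfdeg, hf⟩ := pb.exists_eq_aeval (algebraMap ↥(integralClosure A L) L (x * s ^ ℓ))
  rw [hgen'] at hf
  rw [hdim] at hfdeg
  set T : ℕ → L := fun i => algebraMap K L (f.coeff i) * (s : L) ^ i with hT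
  have hsum : algebraMap ↥(integralClosure A L) L (x * s ^ ℓ) = ∑ i ∈ f.support, T i := by
    rw [hf, Polynomial.aeval_def, Polynomial.eval₂_eq_sum, Polynomial.sum_def]
  have hxne : algebraMap ↥(integralClosure A L) L (x * s ^ ℓ) ≠ 0 := by
    rw [map_mul, map_pow]
    exact mul_ne_zero (fun h => hx (ZeroMemClass.coe_eq_zero.mp h)) (pow_ne_zero _ hsL)
  have hsupne : f.support.Nonempty := by
    rcases Finset.eq_empty_or_nonempty f.support with h | h
    · rw [h, Finset.sum_empty] at hsum
      exact absurd hsum hxne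
    · exact h
  have hTne : ∀ i ∈ f.support, T i ≠ 0 := by
    intro i hi
    apply mul_ne_zero
    · rw [map_ne_zero_iff _ (algebraMap K L).injective]
      exact Polynomial.mem_support_iff.mp hi
    · exact pow_ne_zero _ hsL
  -- distinct valuations of distinct terms
  have hsuplt : ∀ i ∈ f.support, i < ℓ := by
    intro i hi
    exact lt_of_le_of_lt (Polynomial.le_natDegree_of_mem_supp i hi) hfdeg
  have hkey : ∀ i ∈ f.support, ∀ j ∈ f.support, i < j → v (T i) ≠ v (T j) := by
    intro i hi j hj hij hvij
    have hTi := hTne i hi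
    have hTj := hTne j hj
    have hr1 : v (T i / T j) = 1 := by
      rw [map_div₀, hvij, div_self]
      rw [hv, (Valuation.ne_zero_iff _)]
      exact hTj
    obtain ⟨b, hb⟩ := hv_unit _ (div_ne_zero hTi hTj) hr1
    -- then s^(j-i) ∈ H, contradiction with order ℓ
    have hcine : algebraMap K L (f.coeff i) ≠ 0 := by
      rw [map_ne_zero_iff _ (algebraMap K L).injective]
      exact Polynomial.mem_support_iff.mp hi
    have hcjne : algebraMap K L (f.coeff j) ≠ 0 := by
      rw [map_ne_zero_iff _ (algebraMap K L).injective]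
      exact Polynomial.mem_support_iff.mp hj
    have hbinv : algebraMap ↥(integralClosure A L) L ↑(b⁻¹) =
        (algebraMap ↥(integralClosure A L) L ↑b)⁻¹ := by
      apply eq_inv_of_mul_eq_one_left
      rw [← map_mul]
      norm_cast
      rw [inv_mul_cancel]
      exact map_one _
    have hcq0 : f.coeff i / f.coeff j ≠ 0 :=
      div_ne_zero (Polynomial.mem_support_iff.mp hi) (Polynomial.mem_support_iff.mp hj)
    have hmemH : sU ^ (j - i) ∈ H := by
      rw [memH]
      refine ⟨b⁻¹, Units.mk0 (f.coeff i / f.coeff j) hcq0, ?_⟩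
      rw [hbinv, hb]
      have hju : (↑(sU ^ (j - i)) : L) = (s : L) ^ (j - i) := by
        rw [Units.val_pow_eq_pow_val, hsU, Units.val_mk0]
      rw [hju]
      rw [Units.val_mk0, map_div₀]
      rw [hT]
      have hsplit : (s : L) ^ j = (s : L) ^ i * (s : L) ^ (j - i) := by
        rw [← pow_add, Nat.add_sub_cancel' hij.le]
      field_simp
      rw [hsplit]
      ring
    have h4 : j < ℓ := hsuplt j hj
    exact hord sU hsnotH (j - i) (by omega) (by omega) hmemH
  have hdist : ∀ i ∈ f.support, ∀ j ∈ f.support, i ≠ j → v (T i) ≠ v (T j) := by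
    intro i hi j hj hij
    rcases lt_or_gt_of_ne hij with h | h
    · exact hkey i hi j hj h
    · exact fun he => (hkey j hj i hi h) he.symm
  obtain ⟨j, hjmem, hjmax⟩ := Finset.exists_max_image f.support (fun i => v (T i)) hsupne
  have hjlt : ∀ i ∈ f.support, i ≠ j → v (T i) < v (T j) := fun i hi hij =>
    lt_of_le_of_ne (hjmax i hi) (hdist i hi j hjmem hij)
  have hvsum : v (algebraMap ↥(integralClosure A L) L (x * s ^ ℓ)) = v (T j) := by
    rw [hsum, ← Finset.add_sum_erase _ _ hjmem]
    apply Valuation.map_add_eq_of_lt_left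
    apply Valuation.map_sum_lt
    · rw [hv, (Valuation.ne_zero_iff _)]
      exact hTne j hjmem
    · intro i hi
      exact hjlt i (Finset.mem_of_mem_erase hi) (Finset.ne_of_mem_erase hi)
  -- bound each coefficient
  have hvs : v ((s : L)) ≤ 1 := (hv_le_one _).mpr s.2
  have hvx : v ((x : L)) ≤ 1 := (hv_le_one _).mpr x.2
  have hvs0 : v ((s : L)) ≠ 0 := by rw [hv, (Valuation.ne_zero_iff _)]; exact hsL
  have hcoef : ∀ i ∈ f.support, ∃ a : A, algebraMap A K a = f.coeff i := by
    intro i hi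
    have h1 : v (T i) ≤ v (T j) := hjmax i hi
    have h2 : v (T j) = v ((x : L)) * v ((s : L)) ^ ℓ := by
      rw [← hvsum]
      simp only [map_mul, map_pow]
      rfl
    have h3 : v ((s : L)) ^ ℓ ≤ v ((s : L)) ^ i := by
      have hile : i ≤ ℓ := (hsuplt i hi).le
      calc v ((s : L)) ^ ℓ = v ((s : L)) ^ i * v ((s : L)) ^ (ℓ - i) := by
            rw [← pow_add, Nat.add_sub_cancel' hile]
        _ ≤ v ((s : L)) ^ i * 1 := mul_le_mul_right (pow_le_one' hvs _) _
        _ = v ((s : L)) ^ i := mul_one _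
    have h4 : v (algebraMap K L (f.coeff i)) * v ((s : L)) ^ i ≤ v ((s : L)) ^ i := by
      calc v (algebraMap K L (f.coeff i)) * v ((s : L)) ^ i = v (T i) := by
            rw [hT]; rw [map_mul, map_pow]
        _ ≤ v (T j) := h1
        _ = v ((x : L)) * v ((s : L)) ^ ℓ := h2
        _ ≤ 1 * v ((s : L)) ^ ℓ := mul_le_mul_left hvx _
        _ = v ((s : L)) ^ ℓ := one_mul _
        _ ≤ v ((s : L)) ^ i := h3
    have h5 : v (algebraMap K L (f.coeff i)) ≤ 1 := by
      have hne : v ((s : L)) ^ i ≠ 0 := pow_ne_zero _ hvs0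
      calc v (algebraMap K L (f.coeff i))
          = v (algebraMap K L (f.coeff i)) * v ((s : L)) ^ i * (v ((s : L)) ^ i)⁻¹ := by
            rw [mul_assoc, mul_inv_cancel₀ hne, mul_one]
        _ ≤ v ((s : L)) ^ i * (v ((s : L)) ^ i)⁻¹ := mul_le_mul_left h4 _
        _ = 1 := mul_inv_cancel₀ hne
    exact capA _ ((hv_le_one _).mp h5)
  -- assemble the polynomial over `A`
  have hcoefAll : ∀ i : ℕ, ∃ a : A, i ∈ f.support → algebraMap A K a = f.coeff i := by
    intro i
    by_cases h : i ∈ f.support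
    · obtain ⟨a, ha⟩ := hcoef i h
      exact ⟨a, fun _ => ha⟩
    · exact ⟨0, fun h' => absurd h' h⟩
  choose F hF using hcoefAll
  have hfinal : x * s ^ ℓ =
      ∑ i ∈ f.support, algebraMap A ↥(integralClosure A L) (F i) * s ^ i := by
    apply IsFractionRing.injective ↥(integralClosure A L) L
    rw [hsum, map_sum]
    apply Finset.sum_congr rfl
    intro i hi
    rw [map_mul, map_pow, ← IsScalarTower.algebraMap_apply A ↥(integralClosure A L) L,
      IsScalarTower.algebraMap_apply A K L, hF i hi]
    rfl
  rw [hfinal]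
  apply Subalgebra.sum_mem
  intro i _
  exact mul_mem (Subalgebra.algebraMap_mem _ _)
    (pow_mem (Algebra.subset_adjoin (Set.mem_singleton s)) i)
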